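/- (Proposition 2, ratio form) Fix μ > 0, a = b = 7/2, and a positive integer K. Then lim_{T→∞} P_b(K, T+1) / P_b(K, T) = λ, where λ = μ/(μ + b) and the limit is over T ∈ ℕ tending to infinity. -/

import Mathlib

open scoped BigOperators

/-- The distribution of the number of users in the coverage of a cluster of `K` RRUs:
`P_K(n) = b^{Ka} μ^n Γ(n + Ka) / ((μ + b)^{Ka+n} Γ(Ka) n!)` with `a = b = 7/2`. -/
noncomputable def Puser (μ : ℝ) (K : ℕ) (n : ℕ) : ℝ :=
  (7/2 : ℝ) ^ ((K : ℝ) * (7/2)) * μ ^ n * Real.Gamma ((n : ℝ) + (K : ℝ) * (7/2)) /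
    ((μ + 7/2) ^ ((K : ℝ) * (7/2) + (n : ℝ)) * Real.Gamma ((K : ℝ) * (7/2)) *
      (n.factorial : ℝ))

/-- The `n`-th summand of the user blocking probability: `((n − T)/n)·P_K(n)` for
`n ≥ T + 1`, and `0` otherwise. -/
noncomputable def blockTerm (μ : ℝ) (K T : ℕ) (n : ℕ) : ℝ :=
  if T + 1 ≤ n then (((n : ℝ) - (T : ℝ)) / (n : ℝ)) * Puser μ K n else 0

/-- The user blocking probability `P_b(K,T) = Σ_{n=T+1}^∞ ((n − T)/n)·P_K(n)`. -/
noncomputable def Pblock (μ : ℝ) (K T : ℕ) : ℝ := ∑' n : ℕ, blockTerm μ K T n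


open Filter Topology

/-- Tail sums of a sequence. -/
noncomputable def tailSum (f : ℕ → ℝ) (T : ℕ) : ℝ := ∑' k, f (k + T)

lemma tailSum_summable {f : ℕ → ℝ} (hs : Summable f) (T : ℕ) :
    Summable (fun k => f (k + T)) := (summable_nat_add_iff T).2 hs

lemma tailSum_pos {f : ℕ → ℝ} (hs : Summable f) (hf : ∀ n, 0 < f n) (T : ℕ) :
    0 < tailSum f T :=
  lt_of_lt_of_le (hf (0 + T)) (Summable.le_tsum (tailSum_summable hs T) 0 (fun _ _ => (hf _).le))

lemma summable_of_ratio {f : ℕ → ℝ} (hf : ∀ n, 0 < f n) {l : ℝ} (hl1 : l < 1)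
    (hr : Tendsto (fun n => f (n+1) / f n) atTop (𝓝 l)) : Summable f := by
  refine summable_of_ratio_test_tendsto_lt_one hl1
    (Filter.Eventually.of_forall fun n => (hf n).ne') (hr.congr fun n => ?_)
  rw [Real.norm_of_nonneg (hf _).le, Real.norm_of_nonneg (hf _).le]

lemma tailSum_ratio {f : ℕ → ℝ} (hf : ∀ n, 0 < f n) {l : ℝ} (hl1 : l < 1)
    (hr : Tendsto (fun n => f (n+1) / f n) atTop (𝓝 l)) :
    Tendsto (fun T => tailSum f (T+1) / tailSum f T) atTop (𝓝 l) := by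
  have hs := summable_of_ratio hf hl1 hr
  rw [Metric.tendsto_atTop]
  intro ε hε
  have hε2 : 0 < ε/2 := by linarith
  obtain ⟨N, hN⟩ := (Metric.tendsto_atTop.1 hr) (ε/2) hε2
  refine ⟨N, fun T hT => ?_⟩
  have key : ∀ n, N ≤ n → (l - ε/2) * f n ≤ f (n+1) ∧ f (n+1) ≤ (l + ε/2) * f n := by
    intro n hn
    have h := hN n hn
    rw [Real.dist_eq, abs_lt] at h
    have h1 : l - ε/2 ≤ f (n+1) / f n := by linarith
    have h2 : f (n+1) / f n ≤ l + ε/2 := by linarith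
    constructor
    · calc (l - ε/2) * f n ≤ (f (n+1) / f n) * f n :=
            mul_le_mul_of_nonneg_right h1 (hf n).le
        _ = f (n+1) := div_mul_cancel₀ _ (hf n).ne'
    · calc f (n+1) = (f (n+1) / f n) * f n := (div_mul_cancel₀ _ (hf n).ne').symm
        _ ≤ (l + ε/2) * f n := mul_le_mul_of_nonneg_right h2 (hf n).le
  have hFT := tailSum_pos hs hf T
  have hup : tailSum f (T+1) ≤ (l + ε/2) * tailSum f T := by
    have h := Summable.tsum_le_tsum (f := fun k => f (k + (T+1))) (g := fun k => (l + ε/2) * f (k + T))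
      (fun k => by
        have he : k + (T+1) = (k + T) + 1 := by ring
        simp only [he]
        exact (key (k+T) (le_trans hT (Nat.le_add_left T k))).2)
      (tailSum_summable hs (T+1)) ((tailSum_summable hs T).mul_left _)
    rwa [tsum_mul_left] at h
  have hlow : (l - ε/2) * tailSum f T ≤ tailSum f (T+1) := by
    have h := Summable.tsum_le_tsum (f := fun k => (l - ε/2) * f (k + T)) (g := fun k => f (k + (T+1)))
      (fun k => by
        have he : k + (T+1) = (k + T) + 1 := by ring
        simp only [he]
        exact (key (k+T) (le_trans hT (Nat.le_add_left T k))).1)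
      ((tailSum_summable hs T).mul_left _) (tailSum_summable hs (T+1))
    rwa [tsum_mul_left] at h
  have h1 : tailSum f (T+1) / tailSum f T ≤ l + ε/2 := (div_le_iff₀ hFT).2 (by linarith)
  have h2 : l - ε/2 ≤ tailSum f (T+1) / tailSum f T := (le_div_iff₀ hFT).2 (by linarith)
  rw [Real.dist_eq, abs_lt]
  constructor <;> linarith

lemma ratio_aux (x : ℝ) {y : ℝ} (hy : 0 < y) :
    Tendsto (fun n : ℕ => ((n:ℝ) + x) / ((n:ℝ) + y)) atTop (𝓝 1) := by
  have h : Tendsto (fun n : ℕ => 1 + (x - y)/((n:ℝ) + y)) atTop (𝓝 (1 + 0)) := by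
    refine tendsto_const_nhds.add (Tendsto.div_atTop tendsto_const_nhds ?_)
    exact tendsto_atTop_add_const_right _ y tendsto_natCast_atTop_atTop
  rw [add_zero] at h
  refine h.congr fun n => ?_
  have hn : ((n:ℝ) + y) ≠ 0 := by positivity
  field_simp
  ring

section aux
variable {μ : ℝ} {K : ℕ}

lemma c_pos (hK : 0 < K) : 0 < (K : ℝ) * (7/2) := by
  have : (1:ℝ) ≤ (K:ℝ) := by exact_mod_cast hK
  nlinarith

lemma Puser_pos (hμ : 0 < μ) (hK : 0 < K) (n : ℕ) : 0 < Puser μ K n := by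
  have hc := c_pos (K := K) hK
  have hb : (0:ℝ) < μ + 7/2 := by linarith
  unfold Puser
  apply div_pos
  · exact mul_pos (mul_pos (Real.rpow_pos_of_pos (by norm_num) _) (pow_pos hμ n))
      (Real.Gamma_pos_of_pos (by positivity))
  · exact mul_pos (mul_pos (Real.rpow_pos_of_pos hb _) (Real.Gamma_pos_of_pos hc))
      (by exact_mod_cast n.factorial_pos)

lemma Puser_succ (hμ : 0 < μ) (hK : 0 < K) (n : ℕ) :
    Puser μ K (n+1) = Puser μ K n * (μ * ((n:ℝ) + (K:ℝ)*(7/2)) / ((μ + 7/2) * ((n:ℝ) + 1))) := by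
  have hc := c_pos (K := K) hK
  have hb : (0:ℝ) < μ + 7/2 := by linarith
  set c : ℝ := (K:ℝ) * (7/2) with hcdef
  have hnc : (0:ℝ) < (n:ℝ) + c := by positivity
  unfold Puser
  rw [show ((n+1 : ℕ):ℝ) + c = ((n:ℝ) + c) + 1 by push_cast; ring,
    Real.Gamma_add_one hnc.ne',
    show c + ((n+1 : ℕ):ℝ) = (c + (n:ℝ)) + 1 by push_cast; ring,
    Real.rpow_add_one hb.ne', pow_succ, Nat.factorial_succ]
  have hX : (0:ℝ) < (μ + 7/2) ^ (c + (n:ℝ)) := Real.rpow_pos_of_pos hb _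
  have hG : Real.Gamma c ≠ 0 := (Real.Gamma_pos_of_pos hc).ne'
  have hF : ((n.factorial : ℝ)) ≠ 0 := by exact_mod_cast n.factorial_pos.ne'
  have hn1 : ((n:ℝ) + 1) ≠ 0 := by positivity
  push_cast
  field_simp
  ring_nf
  simp only [hcdef]
  ring

lemma Puser_ratio_tendsto (hμ : 0 < μ) (hK : 0 < K) :
    Tendsto (fun n => Puser μ K (n+1) / Puser μ K n) atTop (𝓝 (μ / (μ + 7/2))) := by
  have hc := c_pos (K := K) hK
  have hb : (0:ℝ) < μ + 7/2 := by linarith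
  have h : Tendsto (fun n : ℕ => (μ / (μ + 7/2)) * (((n:ℝ) + (K:ℝ)*(7/2)) / ((n:ℝ) + 1)))
      atTop (𝓝 ((μ / (μ + 7/2)) * 1)) := tendsto_const_nhds.mul (ratio_aux _ one_pos)
  rw [mul_one] at h
  refine h.congr fun n => ?_
  rw [Puser_succ hμ hK n, mul_comm (Puser μ K n),
    mul_div_cancel_right₀ _ (Puser_pos hμ hK n).ne', div_mul_div_comm]

lemma h_pos (hμ : 0 < μ) (hK : 0 < K) (k : ℕ) :
    0 < Puser μ K (k+1) / ((k:ℝ) + 1) :=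
  div_pos (Puser_pos hμ hK _) (by positivity)

lemma h_ratio_tendsto (hμ : 0 < μ) (hK : 0 < K) :
    Tendsto (fun k => (Puser μ K (k+1+1) / (((k+1:ℕ):ℝ)+1)) / (Puser μ K (k+1) / ((k:ℝ)+1)))
      atTop (𝓝 (μ / (μ + 7/2))) := by
  have h1 : Tendsto (fun k : ℕ => Puser μ K (k+1+1) / Puser μ K (k+1)) atTop
      (𝓝 (μ / (μ + 7/2))) := (Puser_ratio_tendsto hμ hK).comp (tendsto_add_atTop_nat 1)
  have h2 := ratio_aux 1 (y := (2:ℝ)) (by norm_num)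
  have h := h1.mul h2
  rw [mul_one] at h
  refine h.congr fun k => ?_
  have hk1 : ((k:ℝ) + 1) ≠ 0 := by positivity
  have hk2 : ((k:ℝ) + 2) ≠ 0 := by positivity
  have hp : Puser μ K (k+1) ≠ 0 := (Puser_pos hμ hK _).ne'
  push_cast
  field_simp
  ring_nf

end aux

/-- Proposition 2, ratio form:
`lim_{T→∞} P_b(K,T+1)/P_b(K,T) = λ` with `λ = μ/(μ+b)`. -/
theorem Pblock_ratio_tendsto (μ : ℝ) (hμ : 0 < μ) (K : ℕ) (hK : 0 < K) :
    Filter.Tendsto (fun T : ℕ => Pblock μ K (T + 1) / Pblock μ K T)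
      Filter.atTop (nhds (μ / (μ + 7/2))) := by
  set l : ℝ := μ / (μ + 7/2) with hldef
  have hb : (0:ℝ) < μ + 7/2 := by linarith
  have hl1 : l < 1 := by rw [hldef, div_lt_one hb]; linarith
  set P : ℕ → ℝ := Puser μ K with hPdef
  set h : ℕ → ℝ := fun k => Puser μ K (k+1) / ((k:ℝ) + 1) with hhdef
  have hhpos : ∀ k, 0 < h k := h_pos hμ hK
  have hhr : Tendsto (fun k => h (k+1) / h k) atTop (𝓝 l) := h_ratio_tendsto hμ hK
  set Qt : ℕ → ℝ := tailSum h with hQtdef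
  have hQpos : ∀ T, 0 < Qt T := tailSum_pos (summable_of_ratio hhpos hl1 hhr) hhpos
  have hQr : Tendsto (fun T => Qt (T+1) / Qt T) atTop (𝓝 l) := tailSum_ratio hhpos hl1 hhr
  have hfinal : Tendsto (fun T => tailSum Qt (T+1) / tailSum Qt T) atTop (𝓝 l) :=
    tailSum_ratio hQpos hl1 hQr
  -- summability facts
  have hPsum : Summable P :=
    summable_of_ratio (Puser_pos hμ hK) hl1 (Puser_ratio_tendsto hμ hK)
  have hbnn : ∀ T n, 0 ≤ blockTerm μ K T n := by
    intro T n
    unfold blockTerm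
    split
    · rename_i hn
      have h0 : (0:ℝ) < (n:ℝ) := by exact_mod_cast Nat.lt_of_lt_of_le (Nat.succ_pos T) hn
      have hTn : (T:ℝ) ≤ (n:ℝ) := by exact_mod_cast Nat.le_of_succ_le hn
      exact mul_nonneg (div_nonneg (by linarith) h0.le) (Puser_pos hμ hK n).le
    · exact le_refl 0
  have hble : ∀ T n, blockTerm μ K T n ≤ P n := by
    intro T n
    unfold blockTerm
    split
    · rename_i hn
      have h0 : (0:ℝ) < (n:ℝ) := by exact_mod_cast Nat.lt_of_lt_of_le (Nat.succ_pos T) hn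
      have hTn : (0:ℝ) ≤ (T:ℝ) := Nat.cast_nonneg T
      have hc : ((n:ℝ) - (T:ℝ)) / (n:ℝ) ≤ 1 := by
        rw [div_le_one h0]; linarith
      calc ((n:ℝ) - (T:ℝ)) / (n:ℝ) * Puser μ K n ≤ 1 * Puser μ K n :=
            mul_le_mul_of_nonneg_right hc (Puser_pos hμ hK n).le
        _ = P n := one_mul _
    · exact (Puser_pos hμ hK n).le
  have hbsum : ∀ T, Summable (blockTerm μ K T) := fun T =>
    Summable.of_nonneg_of_le (hbnn T) (hble T) hPsum
  -- the difference sequence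
  set qf : ℕ → ℕ → ℝ := fun T n => if T + 1 ≤ n then P n / (n:ℝ) else 0 with hqfdef
  have hqd : ∀ T n, blockTerm μ K T n - blockTerm μ K (T+1) n = qf T n := by
    intro T n
    by_cases h1 : T + 1 + 1 ≤ n
    · have h2 : T + 1 ≤ n := by omega
      have h0 : (0:ℝ) < (n:ℝ) := by exact_mod_cast Nat.lt_of_lt_of_le (Nat.succ_pos T) h2
      simp only [blockTerm, hqfdef, if_pos h1, if_pos h2]
      push_cast
      field_simp
      ring
    · by_cases h2 : T + 1 ≤ n
      · have hn : n = T + 1 := by omega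
        subst hn
        have h0 : ((T:ℝ) + 1) ≠ 0 := by positivity
        simp only [blockTerm, hqfdef, if_pos h2, if_neg h1]
        push_cast
        field_simp
        rw [hPdef]; ring
      · simp only [blockTerm, hqfdef, if_neg h1, if_neg h2, sub_zero]
  have hqnn : ∀ T n, 0 ≤ qf T n := by
    intro T n
    simp only [hqfdef]
    split
    · rename_i hn
      have h0 : (0:ℝ) < (n:ℝ) := by exact_mod_cast Nat.lt_of_lt_of_le (Nat.succ_pos T) hn
      exact div_nonneg (Puser_pos hμ hK n).le h0.le
    · exact le_refl 0
  have hqle : ∀ T n, qf T n ≤ P n := by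
    intro T n
    simp only [hqfdef]
    split
    · rename_i hn
      have h0 : (1:ℝ) ≤ (n:ℝ) := by exact_mod_cast Nat.lt_of_lt_of_le (Nat.succ_pos T) hn
      exact div_le_self (Puser_pos hμ hK n).le h0
    · exact (Puser_pos hμ hK n).le
  have hqsum : ∀ T, Summable (qf T) := fun T =>
    Summable.of_nonneg_of_le (hqnn T) (hqle T) hPsum
  have hQeq : ∀ T, (∑' n, qf T n) = Qt T := by
    intro T
    rw [← Summable.sum_add_tsum_nat_add (T+1) (hqsum T)]
    have hz : (∑ i ∈ Finset.range (T+1), qf T i) = 0 :=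
      Finset.sum_eq_zero fun i hi => if_neg (by
        have := Finset.mem_range.1 hi; omega)
    rw [hz, zero_add]
    refine tsum_congr fun i => ?_
    have he : i + (T + 1) = (i + T) + 1 := by omega
    rw [he]
    have hpos' : T + 1 ≤ (i + T) + 1 := by omega
    simp only [hqfdef, if_pos hpos', hhdef]
    push_cast
    ring
  have htel : ∀ T, Pblock μ K T - Pblock μ K (T+1) = Qt T := by
    intro T
    rw [Pblock, Pblock, ← Summable.tsum_sub (hbsum T) (hbsum (T+1)), ← hQeq T]
    exact tsum_congr (hqd T)
  have hPbnn : ∀ T, 0 ≤ Pblock μ K T := fun T => tsum_nonneg (hbnn T)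
  -- Pblock tends to zero
  have hPb0 : Tendsto (fun T => Pblock μ K T) atTop (𝓝 0) := by
    have hbound : ∀ T, Pblock μ K T ≤ tailSum P (T+1) := by
      intro T
      set pf : ℕ → ℝ := fun n => if T + 1 ≤ n then P n else 0 with hpfdef
      have hpfs : Summable pf := Summable.of_nonneg_of_le
        (fun n => by simp only [hpfdef]; split; exacts [(Puser_pos hμ hK n).le, le_refl 0])
        (fun n => by simp only [hpfdef]; split; exacts [le_refl _, (Puser_pos hμ hK n).le])
        hPsum
      have h1 : Pblock μ K T ≤ ∑' n, pf n := by
        refine Summable.tsum_le_tsum (fun n => ?_) (hbsum T) hpfs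
        simp only [hpfdef]
        by_cases hn : T + 1 ≤ n
        · rw [if_pos hn]; exact hble T n
        · rw [if_neg hn]; simp only [blockTerm, if_neg hn]; exact le_refl 0
      have h2 : (∑' n, pf n) = tailSum P (T+1) := by
        rw [← Summable.sum_add_tsum_nat_add (T+1) hpfs]
        have hz : (∑ i ∈ Finset.range (T+1), pf i) = 0 :=
          Finset.sum_eq_zero fun i hi => if_neg (by
            have := Finset.mem_range.1 hi; omega)
        rw [hz, zero_add]
        exact tsum_congr fun i => if_pos (by omega)
      rw [← h2]; exact h1
    have htail0 : Tendsto (fun T => tailSum P (T+1)) atTop (𝓝 0) :=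
      (tendsto_sum_nat_add P).comp (tendsto_add_atTop_nat 1)
    exact squeeze_zero hPbnn hbound htail0
  -- Pblock = tailSum Qt
  have hPbeq : ∀ T, Pblock μ K T = tailSum Qt T := by
    intro T
    have hpart : ∀ m, (∑ j ∈ Finset.range m, Qt (j + T)) =
        Pblock μ K T - Pblock μ K (m + T) := by
      intro m
      have := Finset.sum_range_sub' (f := fun j => Pblock μ K (j + T)) m
      simp only [Nat.zero_add] at this
      rw [← this]
      refine Finset.sum_congr rfl fun j _ => ?_
      have he : (j + T) + 1 = (j + 1) + T := by omega
      rw [← htel (j + T), he]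
    have htendsto : Tendsto (fun m => ∑ j ∈ Finset.range m, Qt (j + T)) atTop
        (𝓝 (Pblock μ K T)) := by
      have h1 : Tendsto (fun m => Pblock μ K T - Pblock μ K (m + T)) atTop
          (𝓝 (Pblock μ K T - 0)) :=
        tendsto_const_nhds.sub (hPb0.comp (tendsto_add_atTop_nat T))
      rw [sub_zero] at h1
      exact h1.congr fun m => (hpart m).symm
    have hhs : HasSum (fun j => Qt (j + T)) (Pblock μ K T) :=
      (hasSum_iff_tendsto_nat_of_nonneg (fun j => (hQpos (j + T)).le) _).2 htendsto
    exact (hhs.tsum_eq).symm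
  refine hfinal.congr fun T => ?_
  rw [hPbeq T, hPbeq (T+1)]
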